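/- Let F be a field, G₁ and G₂ groups, and G = G₁ × G₂. Let V be an irreducible FG-module that has an irreducible FG₂-submodule V₂ (under the restricted G₂-action) with End_{FG₂}(V₂) = F. Then there exists an irreducible FG₁-module V₁ such that V ≅ V₁ ⊗_F V₂ as FG-modules, where G acts on V₁ ⊗_F V₂ by (g₁,g₂)(v₁⊗v₂) = g₁v₁ ⊗ g₂v₂. -/

import Mathlib

set_option maxHeartbeats 1600000


open scoped TensorProduct DirectSum

section Preliminaries

variable (F : Type*) [Field F]

/-- Isomorphism (equivalence) of representations: an `F`-linear equivalence intertwining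
the two actions. -/
def RepIso {G : Type*} [Monoid G] {V V' : Type*} [AddCommMonoid V] [Module F V]
    [AddCommMonoid V'] [Module F V'] (ρ : Representation F G V) (τ : Representation F G V') :
    Prop :=
  ∃ e : V ≃ₗ[F] V', ∀ (g : G) (v : V), e (ρ g v) = τ g (e v)

/-- Irreducibility of a representation: the space is nonzero and admits no invariant
subspaces other than `⊥` and `⊤`. -/
def IsIrreducibleRep {G : Type*} [Monoid G] {V : Type*} [AddCommMonoid V] [Module F V]
    (ρ : Representation F G V) : Prop :=
  Nontrivial V ∧ ∀ p : Submodule F V, (∀ g : G, ∀ v ∈ p, ρ g v ∈ p) → p = ⊥ ∨ p = ⊤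

/-- The subrepresentation on an invariant submodule. -/
def subRep {G : Type*} [Monoid G] {V : Type*} [AddCommMonoid V] [Module F V]
    (ρ : Representation F G V) (p : Submodule F V) (hp : ∀ g : G, ∀ v ∈ p, ρ g v ∈ p) :
    Representation F G ↥p where
  toFun g := (ρ g).restrict (fun v hv => hp g v hv)
  map_one' := by ext v; simp [LinearMap.restrict_apply]
  map_mul' g₁ g₂ := by ext v; simp [LinearMap.restrict_apply]

/-- A representation is completely reducible if the underlying module is the sum of its
irreducible invariant submodules. -/
def IsCompletelyReducibleRep {G : Type*} [Monoid G] {V : Type*} [AddCommMonoid V]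
    [Module F V] (ρ : Representation F G V) : Prop :=
  sSup {q : Submodule F V |
    ∃ hq : ∀ g : G, ∀ v ∈ q, ρ g v ∈ q, IsIrreducibleRep F (subRep F ρ q hq)} = ⊤

/-- The homogeneous component determined by `σ`: the sum of all irreducible invariant
submodules whose subrepresentation is isomorphic to `σ`. -/
noncomputable def homComponent {G : Type*} [Monoid G] {V W : Type*} [AddCommMonoid V]
    [Module F V] [AddCommMonoid W] [Module F W] (ρ : Representation F G V)
    (σ : Representation F G W) : Submodule F V :=
  sSup {q : Submodule F V |
    ∃ hq : ∀ g : G, ∀ v ∈ q, ρ g v ∈ q,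
      IsIrreducibleRep F (subRep F ρ q hq) ∧ RepIso F (subRep F ρ q hq) σ}

/-- The set of all homogeneous components of a representation. -/
noncomputable def homComponents {G : Type*} [Monoid G] {V : Type*} [AddCommMonoid V]
    [Module F V] (ρ : Representation F G V) : Set (Submodule F V) :=
  {S | ∃ (q : Submodule F V) (hq : ∀ g : G, ∀ v ∈ q, ρ g v ∈ q),
      IsIrreducibleRep F (subRep F ρ q hq) ∧ S = homComponent F ρ (subRep F ρ q hq)}

/-- A representation `ρ` lies over `σ` if it admits an invariant submodule whose
subrepresentation is isomorphic to `σ`. -/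
def LiesOver {G : Type*} [Monoid G] {V W : Type*} [AddCommMonoid V] [Module F V]
    [AddCommMonoid W] [Module F W] (ρ : Representation F G V) (σ : Representation F G W) :
    Prop :=
  ∃ (q : Submodule F V) (hq : ∀ g : G, ∀ v ∈ q, ρ g v ∈ q),
    RepIso F (subRep F ρ q hq) σ

/-- The stabilizer in `G` of a subspace of a representation space. -/
def stabSubgroup {G : Type*} [Group G] {V : Type*} [AddCommGroup V] [Module F V]
    (ρ : Representation F G V) (S : Submodule F V) : Subgroup G where
  carrier := {g : G | S.map (ρ g) = S}
  one_mem' := by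
    show S.map (ρ 1) = S
    rw [map_one, Module.End.one_eq_id]
    exact Submodule.map_id S
  mul_mem' := by
    intro a b ha hb
    show S.map (ρ (a * b)) = S
    rw [map_mul, Module.End.mul_eq_comp, Submodule.map_comp, hb, ha]
  inv_mem' := by
    intro a ha
    show S.map (ρ a⁻¹) = S
    conv_lhs => rw [← ha]
    rw [← Submodule.map_comp, ← Module.End.mul_eq_comp, ← map_mul, inv_mul_cancel, map_one,
      Module.End.one_eq_id, Submodule.map_id]

theorem stabSubgroup_mapsTo {G : Type*} [Group G] {V : Type*} [AddCommGroup V] [Module F V]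
    (ρ : Representation F G V) (S : Submodule F V) :
    ∀ g : ↥(stabSubgroup F ρ S), ∀ v ∈ S, ρ (g : G) v ∈ S := by
  intro g v hv
  have hg : S.map (ρ (g : G)) = S := g.2
  have := Submodule.mem_map_of_mem (f := ρ (g : G)) hv
  rwa [hg] at this

/-- Outer tensor product of representations of two groups. -/
noncomputable def outerRep {G₁ G₂ : Type*} [Monoid G₁] [Monoid G₂] {V₁ V₂ : Type*}
    [AddCommMonoid V₁] [Module F V₁] [AddCommMonoid V₂] [Module F V₂]
    (ρ₁ : Representation F G₁ V₁) (ρ₂ : Representation F G₂ V₂) :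
    Representation F (G₁ × G₂) (V₁ ⊗[F] V₂) :=
  Representation.tprod (ρ₁.comp (MonoidHom.fst G₁ G₂)) (ρ₂.comp (MonoidHom.snd G₁ G₂))

/-- A projective representation with factor set `α`. -/
def IsProjRep {G : Type*} [Group G] {W : Type*} [AddCommGroup W] [Module F W]
    (X : G → (W →ₗ[F] W)) (α : G → G → Fˣ) : Prop :=
  (∀ g : G, Function.Bijective (X g)) ∧
    ∀ g₁ g₂ : G, (X g₁) ∘ₗ (X g₂) = ((α g₁ g₂ : F)) • X (g₁ * g₂)

/-- Irreducibility of a projective representation: no proper nonzero invariant subspace. -/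
def IsProjIrred {G : Type*} [Group G] {W : Type*} [AddCommGroup W] [Module F W]
    (X : G → (W →ₗ[F] W)) : Prop :=
  Nontrivial W ∧ ∀ p : Submodule F W, (∀ g : G, ∀ w ∈ p, X g w ∈ p) → p = ⊥ ∨ p = ⊤

/-- `D` is a system of representatives for the `(H₁,H₂)`-double cosets in `G`. -/
def IsDCosetReps {G : Type*} [Group G] (H₁ H₂ : Subgroup G) (D : Set G) : Prop :=
  ∀ g : G, ∃! d : G, d ∈ D ∧ ∃ h₁ ∈ H₁, ∃ h₂ ∈ H₂, g = h₁ * d * h₂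

end Preliminaries

section Induction

variable (F : Type*) [Field F] {G : Type*} [Group G] (H : Subgroup G)
variable {W : Type*} [AddCommGroup W] [Module F W] (σ : Representation F ↥H W)

/-- The submodule of relations defining the induced module `FG ⊗_{FH} W` as a quotient
of `FG ⊗_F W`. -/
noncomputable def indRel : Submodule (MonoidAlgebra F G) (MonoidAlgebra F G ⊗[F] W) :=
  Submodule.span (MonoidAlgebra F G)
    {z | ∃ (x : H) (w : W),
      z = (MonoidAlgebra.single (x : G) (1 : F)) ⊗ₜ[F] w
            - (1 : MonoidAlgebra F G) ⊗ₜ[F] (σ x w)}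

/-- The underlying space of the induced module `ind_H^G W = FG ⊗_{FH} W`. -/
noncomputable def IndCar := (MonoidAlgebra F G ⊗[F] W) ⧸ indRel F H σ

noncomputable instance : AddCommGroup (IndCar F H σ) :=
  inferInstanceAs (AddCommGroup ((MonoidAlgebra F G ⊗[F] W) ⧸ indRel F H σ))

noncomputable instance : Module (MonoidAlgebra F G) (IndCar F H σ) :=
  inferInstanceAs (Module (MonoidAlgebra F G) ((MonoidAlgebra F G ⊗[F] W) ⧸ indRel F H σ))

noncomputable instance : Module F (IndCar F H σ) :=
  inferInstanceAs (Module F ((MonoidAlgebra F G ⊗[F] W) ⧸ indRel F H σ))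

noncomputable instance : IsScalarTower F (MonoidAlgebra F G) (IndCar F H σ) :=
  inferInstanceAs (IsScalarTower F (MonoidAlgebra F G)
    ((MonoidAlgebra F G ⊗[F] W) ⧸ indRel F H σ))

/-- The induced representation of `G` on `ind_H^G W = FG ⊗_{FH} W`. -/
noncomputable def IndRep : Representation F G (IndCar F H σ) where
  toFun g :=
    { toFun := fun v => (MonoidAlgebra.single g (1 : F) : MonoidAlgebra F G) • v
      map_add' := fun a b => smul_add _ a b
      map_smul' := fun c v => smul_comm _ c v }
  map_one' := by
    ext v
    show MonoidAlgebra.single (1 : G) (1 : F) • v = v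
    rw [← MonoidAlgebra.one_def, one_smul]
  map_mul' g₁ g₂ := by
    ext v
    show MonoidAlgebra.single (g₁ * g₂) (1 : F) • v = _
    rw [show (MonoidAlgebra.single (g₁ * g₂) (1 : F) : MonoidAlgebra F G)
          = MonoidAlgebra.single g₁ 1 * MonoidAlgebra.single g₂ 1 by
        rw [MonoidAlgebra.single_mul_single, one_mul], mul_smul]
    rfl

end Induction

section DirectSums

variable (F : Type*) [Field F] {G : Type*} [Monoid G]

/-- The direct sum of a family of representations. -/
noncomputable def dsumRep {ι : Type*} {V : ι → Type*} [∀ i, AddCommGroup (V i)]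
    [∀ i, Module F (V i)] (ρ : ∀ i, Representation F G (V i)) :
    Representation F G (⨁ i, V i) where
  toFun g := DFinsupp.mapRange.linearMap (fun i => ρ i g)
  map_one' := by
    simp only [map_one]
    exact DFinsupp.mapRange.linearMap_id
  map_mul' g₁ g₂ := by
    simp only [map_mul, Module.End.mul_eq_comp]
    exact DFinsupp.mapRange.linearMap_comp (fun i => ρ i g₁) (fun i => ρ i g₂)

end DirectSums

section Conjugation

variable {G : Type*} [Group G]

/-- Conjugation `x ↦ g x g⁻¹` as a monoid homomorphism of a normal subgroup. -/
def conjHom {N : Subgroup G} (hN : N.Normal) (g : G) : ↥N →* ↥N where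
  toFun x := ⟨g * (x : G) * g⁻¹, hN.conj_mem x.1 x.2 g⟩
  map_one' := by ext; simp
  map_mul' x y := by ext; simp [mul_assoc]

/-- The conjugate subgroup `xHx⁻¹`. -/
def conjSubgroup (x : G) (H : Subgroup G) : Subgroup G :=
  H.map (MulAut.conj x).toMonoidHom

/-- Conjugating back: the homomorphism `K → H`, `k ↦ x⁻¹ k x`, for `K ≤ xHx⁻¹`. -/
def unconjHom (x : G) (H : Subgroup G) {K : Subgroup G} (hK : K ≤ conjSubgroup x H) :
    ↥K →* ↥H where
  toFun k := ⟨x⁻¹ * (k : G) * x, by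
    obtain ⟨h, hh, e⟩ := hK k.2
    have : x⁻¹ * (k : G) * x = h := by
      rw [← e]; simp [MulAut.conj_apply, mul_assoc]
    rw [this]; exact hh⟩
  map_one' := by ext; simp
  map_mul' a b := by
    ext
    show x⁻¹ * (↑a * ↑b) * x = (x⁻¹ * ↑a * x) * (x⁻¹ * ↑b * x)
    group

/-- The homomorphism `K ∩ xHx⁻¹ → H` (with the source regarded as a subgroup of `K`),
given by `k ↦ x⁻¹ k x`. -/
def mackeyHom (x : G) (H K : Subgroup G) :
    ↥((K ⊓ conjSubgroup x H).subgroupOf K) →* ↥H where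
  toFun l := ⟨x⁻¹ * ((l : ↥K) : G) * x, by
    have h2 : ((l : ↥K) : G) ∈ K ⊓ conjSubgroup x H := l.2
    obtain ⟨h, hh, e⟩ := h2.2
    have : x⁻¹ * ((l : ↥K) : G) * x = h := by
      rw [← e]; simp [MulAut.conj_apply, mul_assoc]
    rw [this]; exact hh⟩
  map_one' := by ext; simp
  map_mul' a b := by
    ext
    show x⁻¹ * (↑↑a * ↑↑b) * x = (x⁻¹ * ↑↑a * x) * (x⁻¹ * ↑↑b * x)
    group

end Conjugation

universe u

open LinearMap

theorem density_lemma {F : Type*} [Field F] {A : Type*} [Ring A] [Algebra F A]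
    {M : Type*} [AddCommGroup M] [Module F M] [Module A M] [IsScalarTower F A M]
    [IsSimpleModule A M]
    (hEnd : ∀ f : M →ₗ[A] M, ∃ c : F, ∀ v : M, f v = c • v)
    {ι : Type*} [Fintype ι] [DecidableEq ι] {w : ι → M} (hw : LinearIndependent F w)
    (u : ι → M) : ∃ a : A, ∀ i, a • w i = u i := by
  haveI : IsSimpleModule A (⊤ : Submodule A M) := IsSimpleModule.congr Submodule.topEquiv
  haveI : IsSemisimpleModule A M :=
    IsSemisimpleModule.of_sSup_simples_eq_top (eq_top_iff.mpr (le_sSup (by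
      exact ‹IsSimpleModule A (⊤ : Submodule A M)›)))
  haveI : IsSemisimpleModule A (ι → M) := by
    refine isSemisimpleModule_of_isSemisimpleModule_submodule'
      (p := fun i => LinearMap.range (LinearMap.single A (fun _ : ι => M) i)) (fun i => ?_)
      (LinearMap.iSup_range_single A _)
    have hinj : Function.Injective (LinearMap.single A (fun _ : ι => M) i) := by
      intro x y h
      have := congrFun (congrArg (fun f => (f : ι → M)) h) i
      simpa using this
    exact IsSemisimpleModule.congr (LinearEquiv.ofInjective _ hinj).symm
  set N : Submodule A (ι → M) := Submodule.span A {w} with hN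
  have hNtop : N = ⊤ := by
    by_contra hne
    obtain ⟨N', hc⟩ := exists_isCompl N
    have hN'ne : N' ≠ ⊥ := by
      intro h
      exact hne (by simpa [h] using hc.codisjoint.eq_top)
    set π : (ι → M) →ₗ[A] (ι → M) :=
      N'.subtype ∘ₗ (Submodule.projectionOnto N' N hc.symm) with hπ
    have hπN : ∀ x ∈ N, π x = 0 := by
      intro x hx
      simp [hπ, Submodule.projectionOnto_apply_right hc.symm ⟨x, hx⟩]
    have hπN' : ∀ x ∈ N', π x = x := by
      intro x hx
      simp [hπ, Submodule.projectionOnto_apply_left hc.symm ⟨x, hx⟩]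
    -- matrix coefficients
    have hd : ∀ i j : ι, ∃ c : F, ∀ v : M,
        π (Pi.single j v) i = c • v := by
      intro i j
      obtain ⟨c, hc'⟩ := hEnd ((LinearMap.proj i) ∘ₗ π ∘ₗ (LinearMap.single A (fun _ : ι => M) j))
      exact ⟨c, fun v => hc' v⟩
    choose c hc' using hd
    have hπapply : ∀ (x : ι → M) (i : ι), π x i = ∑ j, c i j • x j := by
      intro x i
      have hx : x = ∑ j, Pi.single j (x j) := by
        rw [Finset.univ_sum_single]
      conv_lhs => rw [hx]
      rw [map_sum]
      rw [Finset.sum_apply]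
      exact Finset.sum_congr rfl fun j _ => hc' i j (x j)
    have hczero : ∀ i j, c i j = 0 := by
      intro i
      have hw0 : π w = 0 := hπN w (Submodule.mem_span_singleton_self w)
      have : ∀ j, (fun j => c i j) j = 0 := by
        apply Fintype.linearIndependent_iff.mp hw
        rw [← hπapply w i, hw0]
        rfl
      exact this
    have hπ0 : ∀ x, π x = 0 := by
      intro x
      funext i
      rw [hπapply]
      simp [hczero]
    obtain ⟨x, hx, hx0⟩ := (Submodule.ne_bot_iff N').mp hN'ne
    exact hx0 (by rw [← hπN' x hx, hπ0])
  have hu : u ∈ N := hNtop ▸ Submodule.mem_top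
  obtain ⟨a, ha⟩ := Submodule.mem_span_singleton.mp hu
  exact ⟨a, fun i => congrFun ha i⟩


section AuxConstr

open TensorProduct

variable (F : Type*) [Field F] {G₁ G₂ : Type*} [Group G₁] [Group G₂]
variable {V : Type u} [AddCommGroup V] [Module F V]
variable (ρ : Representation F (G₁ × G₂) V) (p : Submodule F V)
variable (hp : ∀ g₂ : G₂, ∀ v ∈ p, (ρ.comp (MonoidHom.inr G₁ G₂)) g₂ v ∈ p)

/-- The space of `G₂`-equivariant `F`-linear maps from `p` to `V`. -/
def eqvHoms : Submodule F (↥p →ₗ[F] V) where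
  carrier := {f | ∀ (g : G₂) (v : ↥p),
    f ((subRep F (ρ.comp (MonoidHom.inr G₁ G₂)) p hp) g v)
      = (ρ.comp (MonoidHom.inr G₁ G₂)) g (f v)}
  add_mem' := by
    intro f₁ f₂ h₁ h₂ g v
    simp [h₁ g v, h₂ g v]
  zero_mem' := by intro g v; simp
  smul_mem' := by
    intro c f hf g v
    simp [hf g v]

lemma ρ_comm (g₁ : G₁) (g₂ : G₂) (x : V) :
    ρ (g₁, 1) (ρ (1, g₂) x) = ρ (1, g₂) (ρ (g₁, 1) x) := by
  have h : ((g₁, 1) : G₁ × G₂) * (1, g₂) = ((1, g₂) : G₁ × G₂) * (g₁, 1) := by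
    simp [Prod.ext_iff]
  calc ρ (g₁, 1) (ρ (1, g₂) x) = ρ ((g₁, 1) * (1, g₂)) x := by rw [map_mul]; rfl
    _ = ρ ((1, g₂) * (g₁, 1)) x := by rw [h]
    _ = ρ (1, g₂) (ρ (g₁, 1) x) := by rw [map_mul]; rfl

/-- The representation of `G₁` on the equivariant homs. -/
def rho1 : Representation F G₁ ↥(eqvHoms F ρ p hp) where
  toFun g₁ :=
    { toFun := fun f => ⟨(ρ (g₁, 1)) ∘ₗ (f : ↥p →ₗ[F] V), by
        intro g v
        have hf := f.2 g v
        simp only [LinearMap.comp_apply]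
        rw [hf]
        have : (ρ.comp (MonoidHom.inr G₁ G₂)) g = ρ (1, g) := rfl
        rw [this]
        exact ρ_comm F ρ g₁ g _⟩
      map_add' := by intro f₁ f₂; ext v; simp
      map_smul' := by intro c f; ext v; simp }
  map_one' := by
    refine LinearMap.ext fun f => ?_
    refine Subtype.ext (LinearMap.ext fun v => ?_)
    show ρ (1, 1) ((f : ↥p →ₗ[F] V) v) = (f : ↥p →ₗ[F] V) v
    rw [show ((1 : G₁), (1 : G₂)) = (1 : G₁ × G₂) from rfl, map_one]
    rfl
  map_mul' g g' := by
    refine LinearMap.ext fun f => ?_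
    refine Subtype.ext (LinearMap.ext fun v => ?_)
    show ρ (g * g', 1) ((f : ↥p →ₗ[F] V) v) = ρ (g, 1) (ρ (g', 1) ((f : ↥p →ₗ[F] V) v))
    rw [show ((g * g', 1) : G₁ × G₂) = (g, 1) * (g', 1) by simp, map_mul]
    rfl

/-- Evaluation map `eqvHoms ⊗ p → V`. -/
noncomputable def evMap : (↥(eqvHoms F ρ p hp) ⊗[F] ↥p) →ₗ[F] V :=
  TensorProduct.lift (eqvHoms F ρ p hp).subtype

@[simp] lemma evMap_tmul (f : ↥(eqvHoms F ρ p hp)) (w : ↥p) :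
    evMap F ρ p hp (f ⊗ₜ[F] w) = (f : ↥p →ₗ[F] V) w := rfl

lemma evMap_equivariant (g : G₁ × G₂) (t : ↥(eqvHoms F ρ p hp) ⊗[F] ↥p) :
    evMap F ρ p hp
        (outerRep F (rho1 F ρ p hp) (subRep F (ρ.comp (MonoidHom.inr G₁ G₂)) p hp) g t)
      = ρ g (evMap F ρ p hp t) := by
  induction t with
  | zero => simp
  | add x y hx hy => simp [hx, hy]
  | tmul f w =>
      obtain ⟨g₁, g₂⟩ := g
      have key : outerRep F (rho1 F ρ p hp)
            (subRep F (ρ.comp (MonoidHom.inr G₁ G₂)) p hp) (g₁, g₂) (f ⊗ₜ[F] w)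
          = (rho1 F ρ p hp g₁ f) ⊗ₜ[F]
              (subRep F (ρ.comp (MonoidHom.inr G₁ G₂)) p hp g₂ w) := rfl
      rw [key, evMap_tmul, evMap_tmul]
      have h2 : ((rho1 F ρ p hp g₁ f : ↥(eqvHoms F ρ p hp)) : ↥p →ₗ[F] V)
          = (ρ (g₁, 1)) ∘ₗ (f : ↥p →ₗ[F] V) := rfl
      rw [h2, LinearMap.comp_apply, f.2 g₂ w]
      have h5 : (ρ.comp (MonoidHom.inr G₁ G₂)) g₂ = ρ (1, g₂) := rfl
      rw [h5, ρ_comm]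
      rw [show ((g₁, g₂) : G₁ × G₂) = (1, g₂) * (g₁, 1) by simp, map_mul]
      rfl

lemma eqvHoms_asAlgebraHom (f : ↥(eqvHoms F ρ p hp)) (a : MonoidAlgebra F G₂) (w : ↥p) :
    (f : ↥p →ₗ[F] V)
        (Representation.asAlgebraHom (subRep F (ρ.comp (MonoidHom.inr G₁ G₂)) p hp) a w)
      = Representation.asAlgebraHom (ρ.comp (MonoidHom.inr G₁ G₂)) a
          ((f : ↥p →ₗ[F] V) w) := by
  induction a using MonoidAlgebra.induction_linear with
  | zero => simp only [map_zero, LinearMap.zero_apply, map_zero]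
  | add a b ha hb => simp only [map_add, LinearMap.add_apply, ha, hb]
  | single g c =>
      rw [Representation.asAlgebraHom_single, Representation.asAlgebraHom_single]
      simp only [LinearMap.smul_apply, map_smul]
      rw [f.2 g w]

end AuxConstr


/-- Theorem 3.11(b): let `G = G₁ × G₂` and let `V` be an irreducible `FG`-module with an
irreducible `FG₂`-submodule `V₂` such that `End_{FG₂}(V₂) = F`.  Then there is an
irreducible `FG₁`-module `V₁` with `V ≅ V₁ ⊗_F V₂` as `FG`-modules. -/
theorem outer_tensor_factorization
    (F : Type*) [Field F] (G₁ G₂ : Type*) [Group G₁] [Group G₂]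
    (V : Type u) [AddCommGroup V] [Module F V] (ρ : Representation F (G₁ × G₂) V)
    (hρ : IsIrreducibleRep F ρ)
    (p : Submodule F V)
    (hp : ∀ g₂ : G₂, ∀ v ∈ p, (ρ.comp (MonoidHom.inr G₁ G₂)) g₂ v ∈ p)
    (hpirr : IsIrreducibleRep F (subRep F (ρ.comp (MonoidHom.inr G₁ G₂)) p hp))
    (hEnd : ∀ f : ↥p →ₗ[F] ↥p,
      (∀ (g : G₂) (v : ↥p), f ((subRep F (ρ.comp (MonoidHom.inr G₁ G₂)) p hp) g v)
          = (subRep F (ρ.comp (MonoidHom.inr G₁ G₂)) p hp) g (f v)) →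
        ∃ c : F, ∀ v : ↥p, f v = c • v) :
    ∃ (V₁ : Type u) (_ : AddCommGroup V₁) (_ : Module F V₁)
      (ρ₁ : Representation F G₁ V₁),
      IsIrreducibleRep F ρ₁ ∧
        RepIso F ρ (outerRep F ρ₁ (subRep F (ρ.comp (MonoidHom.inr G₁ G₂)) p hp)) := by
  classical
  obtain ⟨hpnontriv, hpsub⟩ := hpirr
  haveI : Nontrivial ↥p := hpnontriv
  -- abbreviations (as plain terms)
  -- the module structure on ↥p over the group algebra
  letI modA : Module (MonoidAlgebra F G₂) ↥p :=
    { smul := fun a x =>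
        Representation.asAlgebraHom (subRep F (ρ.comp (MonoidHom.inr G₁ G₂)) p hp) a x
      one_smul := fun x => by
        show Representation.asAlgebraHom _ 1 x = x
        rw [map_one]; rfl
      mul_smul := fun a b x => by
        show Representation.asAlgebraHom _ (a * b) x = _
        rw [map_mul]; rfl
      smul_zero := fun a => map_zero _
      smul_add := fun a x y => map_add _ x y
      add_smul := fun a b x => by
        show Representation.asAlgebraHom _ (a + b) x = _
        rw [map_add]; rfl
      zero_smul := fun x => by
        show Representation.asAlgebraHom _ 0 x = 0
        rw [map_zero]; rfl }
  have hsmul : ∀ (a : MonoidAlgebra F G₂) (x : ↥p),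
      a • x = Representation.asAlgebraHom
        (subRep F (ρ.comp (MonoidHom.inr G₁ G₂)) p hp) a x := fun _ _ => rfl
  letI towerA : IsScalarTower F (MonoidAlgebra F G₂) ↥p := by
    constructor
    intro c a x
    rw [hsmul, hsmul, map_smul]
    rfl
  have hofsmul : ∀ (g : G₂) (x : ↥p),
      (MonoidAlgebra.of F G₂ g) • x
        = subRep F (ρ.comp (MonoidHom.inr G₁ G₂)) p hp g x := by
    intro g x
    rw [hsmul, Representation.asAlgebraHom_of]
  haveI simpleA : IsSimpleModule (MonoidAlgebra F G₂) ↥p := by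
    refine (isSimpleModule_iff _ _).mpr ?_
    constructor
    intro q
    let q' : Submodule F ↥p :=
      { carrier := q
        zero_mem' := q.zero_mem
        add_mem' := fun h1 h2 => q.add_mem h1 h2
        smul_mem' := fun c x hx => by
          rw [← algebraMap_smul (MonoidAlgebra F G₂) c x]
          exact q.smul_mem _ hx }
    have hq'inv : ∀ g : G₂, ∀ v ∈ q',
        subRep F (ρ.comp (MonoidHom.inr G₁ G₂)) p hp g v ∈ q' := by
      intro g v hv
      rw [← hofsmul]
      exact q.smul_mem _ hv
    rcases hpsub q' hq'inv with h | h
    · left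
      rw [eq_bot_iff]
      intro x hx
      have hx' : x ∈ q' := hx
      rw [h] at hx'
      simpa using hx'
    · right
      rw [eq_top_iff]
      intro x _
      have hx' : x ∈ q' := h ▸ Submodule.mem_top
      exact hx'
  have hEndA : ∀ f : ↥p →ₗ[MonoidAlgebra F G₂] ↥p, ∃ c : F, ∀ v : ↥p, f v = c • v := by
    intro f
    have hFlin : ∀ (c : F) (v : ↥p), f (c • v) = c • f v := by
      intro c v
      rw [← algebraMap_smul (MonoidAlgebra F G₂) c v, map_smul,
        algebraMap_smul]
    refine hEnd
      { toFun := f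
        map_add' := f.map_add
        map_smul' := hFlin } ?_
    intro g v
    show f (subRep F (ρ.comp (MonoidHom.inr G₁ G₂)) p hp g v)
      = subRep F (ρ.comp (MonoidHom.inr G₁ G₂)) p hp g (f v)
    rw [← hofsmul, map_smul, hofsmul]
  -- injectivity of the evaluation map
  have hker : ∀ t : ↥(eqvHoms F ρ p hp) ⊗[F] ↥p, evMap F ρ p hp t = 0 → t = 0 := by
    intro t ht
    let b := Module.Basis.ofVectorSpace F ↥p
    let e : (↥(eqvHoms F ρ p hp) ⊗[F] ↥p) ≃ₗ[F]
        ((Module.Basis.ofVectorSpaceIndex F ↥p) →₀ ↥(eqvHoms F ρ p hp)) :=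
      (LinearEquiv.lTensor ↥(eqvHoms F ρ p hp) b.repr) ≪≫ₗ
        TensorProduct.finsuppScalarRight F F ↥(eqvHoms F ρ p hp) _
    have hsymm_single : ∀ (i) (f : ↥(eqvHoms F ρ p hp)),
        e.symm (Finsupp.single i f) = f ⊗ₜ[F] (b i) := by
      intro i f
      show (LinearEquiv.lTensor ↥(eqvHoms F ρ p hp) b.repr).symm
          ((TensorProduct.finsuppScalarRight F F ↥(eqvHoms F ρ p hp) _).symm
            (Finsupp.single i f)) = _
      rw [TensorProduct.finsuppScalarRight_symm_apply_single]
      show (TensorProduct.congr (LinearEquiv.refl F ↥(eqvHoms F ρ p hp)) b.repr).symm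
          (f ⊗ₜ[F] Finsupp.single i 1) = _
      rw [TensorProduct.congr_symm_tmul, b.repr_symm_single_one]
      rfl
    set c := e t with hcdef
    have htc : t = e.symm c := by rw [hcdef, LinearEquiv.symm_apply_apply]
    have hev : ∀ cc : (Module.Basis.ofVectorSpaceIndex F ↥p) →₀ ↥(eqvHoms F ρ p hp),
        evMap F ρ p hp (e.symm cc)
          = cc.sum (fun i f => (f : ↥p →ₗ[F] V) (b i)) := by
      intro cc
      induction cc using Finsupp.induction_linear with
      | zero => simp
      | add c₁ c₂ h₁ h₂ =>
          rw [map_add, map_add, h₁, h₂,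
            Finsupp.sum_add_index' (fun i => by
                simp only [ZeroMemClass.coe_zero, LinearMap.zero_apply])
              (fun i f₁ f₂ => by
                simp only [Submodule.coe_add, LinearMap.add_apply])]
      | single i f =>
          rw [hsymm_single, evMap_tmul, Finsupp.sum_single_index
            (by simp only [ZeroMemClass.coe_zero, LinearMap.zero_apply])]
    suffices hc0 : c = 0 by
      rw [htc, hc0]
      exact map_zero _
    refine Finsupp.ext fun j => ?_
    show c j = 0
    by_cases hj : j ∈ c.support
    · refine Subtype.ext (LinearMap.ext fun u => ?_)
      show (c j : ↥p →ₗ[F] V) u = 0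
      have hindep : LinearIndependent F (fun i : ↥(c.support) => b (i : _)) :=
        b.linearIndependent.comp Subtype.val Subtype.val_injective
      obtain ⟨a, ha⟩ := density_lemma (F := F) (A := MonoidAlgebra F G₂)
        hEndA hindep (fun i => if (i : _) = j then u else 0)
      have h0 : Representation.asAlgebraHom (ρ.comp (MonoidHom.inr G₁ G₂)) a
          (evMap F ρ p hp t) = 0 := by rw [ht, map_zero]
      rw [htc, hev, map_finsuppSum] at h0
      have hterm : ∀ i ∈ c.support,
          Representation.asAlgebraHom (ρ.comp (MonoidHom.inr G₁ G₂)) a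
              ((c i : ↥p →ₗ[F] V) (b i))
            = (c i : ↥p →ₗ[F] V) (if i = j then u else 0) := by
        intro i hi
        rw [← eqvHoms_asAlgebraHom]
        congr 1
        have hai := ha ⟨i, hi⟩
        rw [hsmul] at hai
        exact hai
      rw [Finsupp.sum, Finset.sum_congr rfl hterm,
        Finset.sum_eq_single_of_mem j hj
          (fun i hi hne => by rw [if_neg hne, map_zero]),
        if_pos rfl] at h0
      exact h0
    · exact Finsupp.notMem_support_iff.mp hj
  have hinj : Function.Injective (evMap F ρ p hp) := by
    intro x y hxy
    have hsub : evMap F ρ p hp (x - y) = 0 := by rw [map_sub, hxy, sub_self]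
    exact sub_eq_zero.mp (hker _ hsub)
  have hincl : (p.subtype : ↥p →ₗ[F] V) ∈ eqvHoms F ρ p hp := fun g v => rfl
  -- surjectivity of the evaluation map
  have hsurj : Function.Surjective (evMap F ρ p hp) := by
    rw [← LinearMap.range_eq_top]
    have hrinv : ∀ g : G₁ × G₂, ∀ v ∈ LinearMap.range (evMap F ρ p hp),
        ρ g v ∈ LinearMap.range (evMap F ρ p hp) := by
      rintro g v ⟨t, rfl⟩
      exact ⟨_, evMap_equivariant F ρ p hp g t⟩
    rcases hρ.2 _ hrinv with h | h
    · exfalso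
      obtain ⟨w, hw⟩ := exists_ne (0 : ↥p)
      have hmem : (w : V) ∈ LinearMap.range (evMap F ρ p hp) :=
        ⟨(⟨p.subtype, hincl⟩ : ↥(eqvHoms F ρ p hp)) ⊗ₜ[F] w, rfl⟩
      rw [h] at hmem
      rw [Submodule.mem_bot] at hmem
      exact hw (by simpa [Submodule.coe_eq_zero] using hmem)
    · exact h
  -- the main equivalence
  let e' : (↥(eqvHoms F ρ p hp) ⊗[F] ↥p) ≃ₗ[F] V :=
    LinearEquiv.ofBijective (evMap F ρ p hp) ⟨hinj, hsurj⟩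
  refine ⟨↥(eqvHoms F ρ p hp), inferInstance, inferInstance, rho1 F ρ p hp, ⟨?_, ?_⟩, ?_⟩
  · -- nontriviality
    obtain ⟨w, hw⟩ := exists_ne (0 : ↥p)
    refine ⟨⟨p.subtype, hincl⟩, 0, fun h => ?_⟩
    have h2 := congrArg (fun f : ↥(eqvHoms F ρ p hp) => (f : ↥p →ₗ[F] V) w) h
    simp only [Submodule.coe_subtype] at h2
    exact hw (by simpa [Submodule.coe_eq_zero] using h2)
  · -- irreducibility
    intro p' hinv'
    by_cases hbot : p' = ⊥
    · left; exact hbot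
    right
    obtain ⟨f₀, hf₀mem, hf₀⟩ := (Submodule.ne_bot_iff p').mp hbot
    set T : Submodule F (↥(eqvHoms F ρ p hp) ⊗[F] ↥p) :=
      Submodule.span F {t | ∃ f ∈ p', ∃ w : ↥p, t = f ⊗ₜ[F] w} with hTdef
    have hTinv : ∀ (g : G₁ × G₂), ∀ t ∈ T,
        outerRep F (rho1 F ρ p hp)
          (subRep F (ρ.comp (MonoidHom.inr G₁ G₂)) p hp) g t ∈ T := by
      intro g t ht
      refine Submodule.span_induction (fun x hx => ?_)
        (by rw [map_zero]; exact T.zero_mem)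
        (fun x y hx hy hx' hy' => by rw [map_add]; exact T.add_mem hx' hy')
        (fun c x hx hx' => by rw [map_smul]; exact T.smul_mem c hx') ht
      obtain ⟨f, hf, w, rfl⟩ := hx
      apply Submodule.subset_span
      exact ⟨rho1 F ρ p hp g.1 f, hinv' g.1 f hf,
        subRep F (ρ.comp (MonoidHom.inr G₁ G₂)) p hp g.2 w, rfl⟩
    have hWtop : Submodule.map (evMap F ρ p hp) T = ⊤ := by
      have hWinv : ∀ g : G₁ × G₂, ∀ v ∈ Submodule.map (evMap F ρ p hp) T,
          ρ g v ∈ Submodule.map (evMap F ρ p hp) T := by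
        rintro g v ⟨t, ht, rfl⟩
        exact ⟨_, hTinv g t ht, evMap_equivariant F ρ p hp g t⟩
      rcases hρ.2 _ hWinv with h | h
      · exfalso
        have hex : ∃ w : ↥p, (f₀ : ↥p →ₗ[F] V) w ≠ 0 := by
          by_contra hall
          push_neg at hall
          exact hf₀ (Subtype.ext (LinearMap.ext fun w => by simpa using hall w))
        obtain ⟨w, hw⟩ := hex
        have hmem : (f₀ : ↥p →ₗ[F] V) w ∈ Submodule.map (evMap F ρ p hp) T :=
          ⟨f₀ ⊗ₜ[F] w, Submodule.subset_span ⟨f₀, hf₀mem, w, rfl⟩, rfl⟩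
        rw [h, Submodule.mem_bot] at hmem
        exact hw hmem
      · exact h
    have hTtop : T = ⊤ := by
      rw [eq_top_iff]
      intro t _
      have hm : evMap F ρ p hp t ∈ Submodule.map (evMap F ρ p hp) T :=
        hWtop ▸ Submodule.mem_top
      obtain ⟨t', ht', hev⟩ := hm
      rwa [← hinj hev]
    obtain ⟨w₀, hw₀⟩ := exists_ne (0 : ↥p)
    obtain ⟨lam, hlam⟩ : ∃ lam : ↥p →ₗ[F] F, lam w₀ = 1 := by
      have hli := LinearIndepOn.singleton (R := F) (v := _root_.id) (i := w₀) hw₀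
      have hmem : w₀ ∈ hli.extend (Set.subset_univ _) :=
        hli.subset_extend _ (Set.mem_singleton _)
      refine ⟨(Module.Basis.extend hli).coord ⟨w₀, hmem⟩, ?_⟩
      have hb : Module.Basis.extend hli ⟨w₀, hmem⟩ = w₀ := Module.Basis.extend_apply_self hli ⟨w₀, hmem⟩
      have hcoord : (Module.Basis.extend hli).coord ⟨w₀, hmem⟩
          ((Module.Basis.extend hli) ⟨w₀, hmem⟩) = 1 := by
        rw [Module.Basis.coord_apply, Module.Basis.repr_self, Finsupp.single_eq_same]
      rwa [hb] at hcoord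
    let lmap : ↥(eqvHoms F ρ p hp) →ₗ[F] (↥p →ₗ[F] ↥(eqvHoms F ρ p hp)) :=
      { toFun := fun f => LinearMap.smulRight lam f
        map_add' := fun f g => LinearMap.ext fun v => by
          simp only [LinearMap.smulRight_apply, LinearMap.add_apply]
          rw [smul_add]
        map_smul' := fun c f => LinearMap.ext fun v => by
          simp only [LinearMap.smulRight_apply, LinearMap.smul_apply, RingHom.id_apply]
          rw [smul_comm] }
    let L := TensorProduct.lift lmap
    have hLT : ∀ t ∈ T, L t ∈ p' := by
      intro t ht
      refine Submodule.span_induction (fun x hx => ?_)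
        (by rw [map_zero]; exact p'.zero_mem)
        (fun x y hx hy hx' hy' => by rw [map_add]; exact p'.add_mem hx' hy')
        (fun c x hx hx' => by rw [map_smul]; exact p'.smul_mem c hx') ht
      obtain ⟨f, hf, w, rfl⟩ := hx
      have hL : L (f ⊗ₜ[F] w) = lam w • f := rfl
      rw [hL]
      exact p'.smul_mem _ hf
    rw [eq_top_iff]
    intro f _
    have hft : (f ⊗ₜ[F] w₀) ∈ T := hTtop ▸ Submodule.mem_top
    have hfp := hLT _ hft
    have hL : L (f ⊗ₜ[F] w₀) = f := by
      show lam w₀ • f = f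
      rw [hlam, one_smul]
    rwa [hL] at hfp
  · -- the representation isomorphism
    refine ⟨e'.symm, ?_⟩
    intro g v
    apply e'.injective
    rw [e'.apply_symm_apply]
    have h1 : e' (outerRep F (rho1 F ρ p hp)
        (subRep F (ρ.comp (MonoidHom.inr G₁ G₂)) p hp) g (e'.symm v))
        = evMap F ρ p hp (outerRep F (rho1 F ρ p hp)
            (subRep F (ρ.comp (MonoidHom.inr G₁ G₂)) p hp) g (e'.symm v)) := rfl
    rw [h1, evMap_equivariant]
    congr 1
    exact (e'.apply_symm_apply v).symm
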